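/- Let {a_j}_{j≥1} be a sequence of nonnegative reals with ∑_{j=1}^∞ a_j ≤ 1. Suppose there exist c₀, β₀ > 0 such that ∑_{j=ℓ+1}^∞ a_j ≤ c₀·a_ℓ^{β₀} for all ℓ ∈ ℕ. Then ∑_{j=2ℓ}^∞ a_j ≤ c₀·ℓ^{−β₀} for all ℓ ∈ ℕ. -/
import Mathlib


/-- Lemma 3.4: Let `(a_j)_{j ≥ 1}` be nonnegative reals with
`∑_{j=1}^∞ a_j ≤ 1`. If there are `c₀, β₀ > 0` with
`∑_{j=ℓ+1}^∞ a_j ≤ c₀·a_ℓ^{β₀}` for all `ℓ ≥ 1`, then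
`∑_{j=2ℓ}^∞ a_j ≤ c₀·ℓ^{−β₀}` for all `ℓ ≥ 1`. -/
theorem sequence_tail_decay (a : ℕ → ℝ) (ha : ∀ j, 0 ≤ a j)
    (hsum : Summable a) (htotal : (∑' j : ℕ, a (j + 1)) ≤ 1)
    (c₀ β₀ : ℝ) (hc₀ : 0 < c₀) (hβ₀ : 0 < β₀)
    (hrec : ∀ ℓ : ℕ, 1 ≤ ℓ → (∑' j : ℕ, a (j + ℓ + 1)) ≤ c₀ * (a ℓ) ^ β₀) :
    ∀ ℓ : ℕ, 1 ≤ ℓ → (∑' j : ℕ, a (j + 2 * ℓ)) ≤ c₀ * (ℓ : ℝ) ^ (-β₀) := by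
  intro ℓ hℓ
  have hshift : ∀ n : ℕ, Summable (fun j => a (j + n)) := fun n =>
    (summable_nat_add_iff n).mpr hsum
  -- tail monotonicity
  have htail : ∀ m n : ℕ, n ≤ m → (∑' j, a (j + m)) ≤ ∑' j, a (j + n) := by
    intro m n hnm
    have h := (Summable.sum_add_tsum_nat_add (f := fun j => a (j + n)) (m - n) (hshift n))
    have hmn : ∀ j : ℕ, j + (m - n) + n = j + m := by omega
    calc (∑' j, a (j + m)) = ∑' j, a (j + (m - n) + n) := by
            exact tsum_congr fun j => by rw [hmn]
      _ ≤ (∑ i ∈ Finset.range (m - n), a (i + n)) + ∑' j, a (j + (m - n) + n) := by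
            have : 0 ≤ ∑ i ∈ Finset.range (m - n), a (i + n) :=
              Finset.sum_nonneg fun i _ => ha _
            linarith
      _ = ∑' j, a (j + n) := h
  -- find ℓ₁ ∈ [ℓ, 2ℓ) with a ℓ₁ ≤ 1/ℓ
  have hℓpos : (0 : ℝ) < (ℓ : ℝ) := by exact_mod_cast hℓ
  obtain ⟨ℓ₁, hmem, hsmall⟩ :
      ∃ ℓ₁ ∈ Finset.Ico ℓ (2 * ℓ), a ℓ₁ ≤ 1 / (ℓ : ℝ) := by
    by_contra hcon
    push_neg at hcon
    have hgt : ∀ i ∈ Finset.Ico (ℓ - 1) (2 * ℓ - 1), 1 / (ℓ : ℝ) < a (i + 1) := by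
      intro i hi
      simp only [Finset.mem_Ico] at hi
      exact hcon (i + 1) (Finset.mem_Ico.mpr ⟨by omega, by omega⟩)
    have hcard : (Finset.Ico (ℓ - 1) (2 * ℓ - 1)).card = ℓ := by
      rw [Nat.card_Ico]; omega
    have h1 : (1 : ℝ) = (ℓ : ℝ) * (1 / (ℓ : ℝ)) := by field_simp
    have hsumgt : (1 : ℝ) < ∑ i ∈ Finset.Ico (ℓ - 1) (2 * ℓ - 1), a (i + 1) := by
      calc (1 : ℝ) = ∑ _i ∈ Finset.Ico (ℓ - 1) (2 * ℓ - 1), 1 / (ℓ : ℝ) := by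
              rw [Finset.sum_const, hcard, nsmul_eq_mul, ← h1]
        _ < _ := by
              apply Finset.sum_lt_sum_of_nonempty
              · rw [Finset.nonempty_Ico]; omega
              · exact hgt
    have hle : (∑ i ∈ Finset.Ico (ℓ - 1) (2 * ℓ - 1), a (i + 1)) ≤ ∑' j, a (j + 1) :=
      Summable.sum_le_tsum _ (fun i _ => ha _) (hshift 1)
    linarith
  simp only [Finset.mem_Ico] at hmem
  have h2 : (∑' j, a (j + 2 * ℓ)) ≤ ∑' j, a (j + (ℓ₁ + 1)) := htail _ _ (by omega)
  have h3 : (∑' j, a (j + (ℓ₁ + 1))) ≤ c₀ * a ℓ₁ ^ β₀ := by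
    have := hrec ℓ₁ (le_trans hℓ hmem.1)
    calc (∑' j, a (j + (ℓ₁ + 1))) = ∑' j, a (j + ℓ₁ + 1) :=
          tsum_congr fun j => by ring_nf
      _ ≤ _ := this
  have h4 : a ℓ₁ ^ β₀ ≤ (ℓ : ℝ) ^ (-β₀) := by
    have : a ℓ₁ ^ β₀ ≤ (1 / (ℓ : ℝ)) ^ β₀ :=
      Real.rpow_le_rpow (ha _) hsmall hβ₀.le
    calc a ℓ₁ ^ β₀ ≤ (1 / (ℓ : ℝ)) ^ β₀ := this
      _ = (ℓ : ℝ) ^ (-β₀) := by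
          rw [one_div, Real.inv_rpow hℓpos.le, ← Real.rpow_neg hℓpos.le]
  calc (∑' j, a (j + 2 * ℓ)) ≤ c₀ * a ℓ₁ ^ β₀ := le_trans h2 h3
    _ ≤ c₀ * (ℓ : ℝ) ^ (-β₀) := by nlinarith
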